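/- Let d ≥ 1, τ > 0, ω > 0, and let p ≥ 1 be an integer. Assume K, H : ℝ × ℝ^d × ℝ^d → ℝ^d are p times continuously differentiable and F̃, G̃ : ℝ^d × ℝ^d → ℝ^d are (p+1) times continuously differentiable. Let x : ℝ → ℝ^d be measurable and bounded, let y : ℝ → ℝ^d be differentiable, suppose x and y are ω-periodic, and suppose that for all t ∈ ℝ: x(t) = F̃( ∫_{−τ}^0 K(θ, x(t+θ), y(t+θ)) dθ, y(t) ) and y'(t) = G̃( ∫_{−τ}^0 H(θ, x(t+θ), y(t+θ)) dθ, y(t) ). Then x is p times continuously differentiable and y is (p+1) times continuously differentiable on ℝ. -/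

import Mathlib

open Real MeasureTheory intervalIntegral Set

section aux

variable {E F : Type*} [NormedAddCommGroup E] [NormedSpace ℝ E] [CompleteSpace E]
  [NormedAddCommGroup F] [NormedSpace ℝ F]

/-- Moving-endpoint FTC for a jointly continuous integrand depending on the parameter. -/
lemma aux_hasDerivAt_moving {h : ℝ → ℝ → E}
    (hh : Continuous (Function.uncurry h)) (t₀ c : ℝ) :
    HasDerivAt (fun t => ∫ s in (t₀ + c)..(t + c), h t s) (h t₀ (t₀ + c)) t₀ := by
  rw [hasDerivAt_iff_isLittleO, Asymptotics.isLittleO_iff]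
  intro ε hε
  obtain ⟨δ, hδ, hcont⟩ :=
    Metric.continuousAt_iff.1 (hh.continuousAt (x := (t₀, t₀ + c))) ε hε
  filter_upwards [Metric.ball_mem_nhds t₀ hδ] with t ht
  have hconts : ∀ u : ℝ, Continuous fun s => h u s := fun u =>
    hh.comp (continuous_const.prodMk continuous_id)
  have hint : ∀ (u : ℝ) (a b : ℝ), IntervalIntegrable (fun s => h u s) volume a b :=
    fun u a b => (hconts u).intervalIntegrable a b
  have e2 : (t - t₀) • h t₀ (t₀ + c) = ∫ _s in (t₀ + c)..(t + c), h t₀ (t₀ + c) := by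
    rw [intervalIntegral.integral_const]
    ring_nf
  rw [intervalIntegral.integral_same, sub_zero, e2,
    ← intervalIntegral.integral_sub (hint t _ _) intervalIntegrable_const]
  have hbd : ∀ s ∈ Set.uIoc (t₀ + c) (t + c), ‖h t s - h t₀ (t₀ + c)‖ ≤ ε := by
    intro s hs
    have hs' : s ∈ Set.uIcc (t₀ + c) (t + c) := Set.uIoc_subset_uIcc hs
    have hsd : |s - (t₀ + c)| ≤ |t - t₀| := by
      have h1 := Set.abs_sub_left_of_mem_uIcc hs'
      have : |(t + c) - (t₀ + c)| = |t - t₀| := by ring_nf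
      linarith [this ▸ h1]
    have : dist (t, s) (t₀, t₀ + c) < δ := by
      rw [Prod.dist_eq, Real.dist_eq, Real.dist_eq]
      have htd : |t - t₀| < δ := by
        have := Metric.mem_ball.1 ht; rwa [Real.dist_eq] at this
      exact max_lt htd (lt_of_le_of_lt hsd htd)
    have := hcont this
    rw [Function.uncurry_apply_pair, Function.uncurry_apply_pair, dist_eq_norm] at this
    exact le_of_lt this
  calc ‖∫ s in (t₀ + c)..(t + c), (h t s - h t₀ (t₀ + c))‖
      ≤ ε * |(t + c) - (t₀ + c)| :=
        intervalIntegral.norm_integral_le_of_norm_le_const hbd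
    _ = ε * ‖t - t₀‖ := by rw [Real.norm_eq_abs]; ring_nf

end aux

section aux2

variable {E F : Type*} [NormedAddCommGroup E] [NormedSpace ℝ E] [CompleteSpace E]
  [NormedAddCommGroup F] [NormedSpace ℝ F]

/-- Derivative of the delayed integral `t ↦ ∫_{t-τ}^t Q(s - t, g s) ds` for `C¹` kernel
and continuous `g`. -/
lemma aux_hasDerivAt_delay {τ : ℝ} (hτ : 0 < τ) {Q : ℝ × F → E} {g : ℝ → F}
    (hQ : ContDiff ℝ 1 Q) (hg : Continuous g) (t₀ : ℝ) :
    HasDerivAt (fun t => ∫ s in (t - τ)..t, Q (s - t, g s))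
      (Q (0, g t₀) - Q (-τ, g (t₀ - τ))
        - ∫ s in (t₀ - τ)..t₀, (fderiv ℝ Q (s - t₀, g s)) (1, 0)) t₀ := by
  have hQc : Continuous Q := hQ.continuous
  have hjoint : Continuous (Function.uncurry fun t s => Q (s - t, g s)) :=
    hQc.comp ((continuous_snd.sub continuous_fst).prodMk (hg.comp continuous_snd))
  have hconts : ∀ t : ℝ, Continuous fun s => Q (s - t, g s) := fun t =>
    hjoint.comp (continuous_const.prodMk continuous_id)
  have hint : ∀ (t a b : ℝ), IntervalIntegrable (fun s => Q (s - t, g s)) volume a b :=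
    fun t a b => (hconts t).intervalIntegrable a b
  -- decomposition
  have key : (fun t => ∫ s in (t - τ)..t, Q (s - t, g s)) =
      fun t => (∫ s in (t₀ - τ)..t₀, Q (s - t, g s))
        + (∫ s in (t₀ + 0)..(t + 0), Q (s - t, g s))
        - (∫ s in (t₀ + (-τ))..(t + (-τ)), Q (s - t, g s)) := by
    funext t
    have h1 := intervalIntegral.integral_add_adjacent_intervals
      (hint t (t - τ) (t₀ - τ)) (hint t (t₀ - τ) t₀)
    have h2 := intervalIntegral.integral_add_adjacent_intervals
      (hint t (t - τ) t₀) (hint t t₀ t)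
    have h3 := intervalIntegral.integral_symm (μ := volume) (t₀ - τ) (t - τ)
      (f := fun s => Q (s - t, g s))
    simp only [add_zero, ← sub_eq_add_neg]
    rw [← h2, ← h1, h3]
    abel
  rw [key]
  -- derivative of the boundary terms
  have hb1 : HasDerivAt (fun t => ∫ s in (t₀ + 0)..(t + 0), Q (s - t, g s))
      (Q (0, g t₀)) t₀ := by
    have := aux_hasDerivAt_moving (h := fun t s => Q (s - t, g s)) hjoint t₀ 0
    simpa using this
  have hb2 : HasDerivAt (fun t => ∫ s in (t₀ + (-τ))..(t + (-τ)), Q (s - t, g s))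
      (Q (-τ, g (t₀ - τ))) t₀ := by
    have := aux_hasDerivAt_moving (h := fun t s => Q (s - t, g s)) hjoint t₀ (-τ)
    have e : t₀ + -τ - t₀ = -τ := by ring
    have e2 : t₀ + -τ = t₀ - τ := by ring
    rw [e, e2] at this
    exact this
  -- parametric part
  have hfd : Continuous (fderiv ℝ Q) := (hQ.fderiv_right (m := 0) (by norm_num)).continuous
  have happ : Continuous fun z : ℝ × F => (fderiv ℝ Q z) ((1 : ℝ), (0 : F)) :=
    (ContinuousLinearMap.apply ℝ E ((1 : ℝ), (0 : F))).continuous.comp hfd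
  -- compact bound
  obtain ⟨B, hB⟩ := (IsCompact.exists_bound_of_continuousOn
    ((isCompact_Icc (a := -τ - 1) (b := (1:ℝ))).prod
      ((isCompact_Icc (a := t₀ - τ) (b := t₀)).image hg))
    happ.continuousOn)
  have hb3 : HasDerivAt (fun t => ∫ s in (t₀ - τ)..t₀, Q (s - t, g s))
      (∫ s in (t₀ - τ)..t₀, -((fderiv ℝ Q (s - t₀, g s)) (1, 0))) t₀ := by
    have := (intervalIntegral.hasDerivAt_integral_of_dominated_loc_of_deriv_le
      (F := fun t s => Q (s - t, g s))
      (F' := fun t s => -((fderiv ℝ Q (s - t, g s)) (1, 0)))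
      (a := t₀ - τ) (b := t₀) (x₀ := t₀) (bound := fun _ => ‖B‖ + 1)
      (s := Metric.ball t₀ 1) (Metric.ball_mem_nhds t₀ one_pos)
      (Filter.Eventually.of_forall fun t => ((hconts t).aestronglyMeasurable))
      (hint t₀ (t₀ - τ) t₀)
      ((happ.comp ((continuous_id.sub continuous_const).prodMk hg)).neg.aestronglyMeasurable)
      ?_ intervalIntegrable_const ?_)
    · exact this.2
    · refine Filter.Eventually.of_forall fun s hs t htb => ?_
      rw [Set.uIoc_of_le (by linarith : t₀ - τ ≤ t₀)] at hs
      have hs1 : t₀ - τ < s := hs.1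
      have hs2 : s ≤ t₀ := hs.2
      have htd : |t - t₀| < 1 := by
        have := Metric.mem_ball.1 htb; rwa [Real.dist_eq] at this
      rw [norm_neg]
      obtain ⟨ht1, ht2⟩ := abs_lt.1 htd
      have hmem : (s - t, g s) ∈ (Set.Icc (-τ - 1) (1:ℝ)) ×ˢ
          (g '' Set.Icc (t₀ - τ) t₀) :=
        Set.mem_prod.2 ⟨(Set.mem_Icc.2 ⟨by linarith, by linarith⟩ :
            s - t ∈ Set.Icc (-τ - 1) (1:ℝ)),
          Set.mem_image_of_mem g ⟨le_of_lt hs1, hs2⟩⟩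
      calc ‖(fderiv ℝ Q (s - t, g s)) (1, 0)‖ ≤ B := hB _ hmem
        _ ≤ ‖B‖ + 1 := by have := le_abs_self B; rw [Real.norm_eq_abs]; linarith
    · refine Filter.Eventually.of_forall fun s _hs t _htb => ?_
      have hdQ : HasFDerivAt Q (fderiv ℝ Q (s - t, g s)) (s - t, g s) :=
        (hQ.differentiable one_ne_zero (s - t, g s)).hasFDerivAt
      have hin : HasDerivAt (fun t : ℝ => ((s - t : ℝ), g s)) ((-1 : ℝ), (0 : F)) t := by
        exact ((hasDerivAt_id t).const_sub s).prodMk (hasDerivAt_const t (g s))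
      have := hdQ.comp_hasDerivAt t hin
      convert this using 1
      · rfl
      have : ((-1 : ℝ), (0 : F)) = -((1 : ℝ), (0 : F)) := by simp [Prod.ext_iff]
      rw [this, map_neg]
  -- combine
  have := (hb3.add hb1).sub hb2
  convert this using 1
  · rfl
  rw [intervalIntegral.integral_neg]
  abel

end aux2

section aux3

variable {E F : Type*} [NormedAddCommGroup E] [NormedSpace ℝ E] [CompleteSpace E]
  [NormedAddCommGroup F] [NormedSpace ℝ F]

lemma aux_contDiff_succ_of_deriv {f : ℝ → E} {n : ℕ} (hd : Differentiable ℝ f)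
    (h : ContDiff ℝ n (deriv f)) : ContDiff ℝ (n + 1 : ℕ) f := by
  have : ((n + 1 : ℕ) : WithTop ℕ∞) = (n : WithTop ℕ∞) + 1 := by push_cast; rfl
  rw [this, contDiff_succ_iff_deriv]
  exact ⟨hd, by simp, h⟩

/-- Continuity of the delayed integral for continuous data. -/
lemma aux_continuous_delay {τ : ℝ} {Q : ℝ × F → E} {g : ℝ → F}
    (hQ : Continuous Q) (hg : Continuous g) :
    Continuous fun t => ∫ s in (t - τ)..t, Q (s - t, g s) := by
  have hjoint : Continuous fun p : ℝ × ℝ => Q (p.2 - p.1, g p.2) :=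
    hQ.comp ((continuous_snd.sub continuous_fst).prodMk (hg.comp continuous_snd))
  have hint : ∀ (t a b : ℝ), IntervalIntegrable (fun s => Q (s - t, g s)) volume a b :=
    fun t a b => (hjoint.comp (continuous_const.prodMk continuous_id)).intervalIntegrable a b
  have key : (fun t => ∫ s in (t - τ)..t, Q (s - t, g s)) =
      fun t => (∫ s in (0:ℝ)..t, Q (s - t, g s)) - ∫ s in (0:ℝ)..(t - τ), Q (s - t, g s) := by
    funext t
    rw [← intervalIntegral.integral_add_adjacent_intervals (hint t (t - τ) 0) (hint t 0 t),
      intervalIntegral.integral_symm (μ := volume) 0 (t - τ) (f := fun s => Q (s - t, g s))]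
    abel
  rw [key]
  exact (intervalIntegral.continuous_parametric_intervalIntegral_of_continuous
      (f := fun t s => Q (s - t, g s)) (μ := volume) hjoint continuous_id).sub
    (intervalIntegral.continuous_parametric_intervalIntegral_of_continuous
      (f := fun t s => Q (s - t, g s)) (μ := volume) hjoint (continuous_id.sub continuous_const))

/-- `C^{min(k+1,m)}` regularity of the delayed integral: each integration gains one
derivative up to the regularity of the kernel. -/
lemma aux_contDiff_delay {τ : ℝ} (hτ : 0 < τ) (m : ℕ) {k : ℕ} {Q : ℝ × F → E} {g : ℝ → F}
    (hQ : ContDiff ℝ m Q) (hg : ContDiff ℝ k g) :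
    ContDiff ℝ (min (k + 1) m : ℕ) (fun t => ∫ s in (t - τ)..t, Q (s - t, g s)) := by
  induction m generalizing Q with
  | zero =>
    simp only [Nat.min_zero, Nat.cast_zero, contDiff_zero]
    exact aux_continuous_delay (contDiff_zero.1 hQ) hg.continuous
  | succ m ih =>
    have hQ1 : ContDiff ℝ 1 Q := hQ.of_le (by exact_mod_cast Nat.one_le_iff_ne_zero.2 (by simp))
    have hder : ∀ t₀, HasDerivAt (fun t => ∫ s in (t - τ)..t, Q (s - t, g s))
        (Q (0, g t₀) - Q (-τ, g (t₀ - τ))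
          - ∫ s in (t₀ - τ)..t₀, (fderiv ℝ Q (s - t₀, g s)) (1, 0)) t₀ :=
      fun t₀ => aux_hasDerivAt_delay hτ hQ1 hg.continuous t₀
    have hdiff : Differentiable ℝ (fun t => ∫ s in (t - τ)..t, Q (s - t, g s)) :=
      fun t₀ => (hder t₀).differentiableAt
    have hP : ContDiff ℝ m (fun z : ℝ × F => (fderiv ℝ Q z) ((1:ℝ), (0:F))) := by
      refine (ContinuousLinearMap.apply ℝ E ((1:ℝ), (0:F))).contDiff.comp ?_
      exact hQ.fderiv_right (by push_cast; rfl)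
    have hNP := ih hP
    have hderiv_eq : deriv (fun t => ∫ s in (t - τ)..t, Q (s - t, g s)) =
        fun t₀ => Q (0, g t₀) - Q (-τ, g (t₀ - τ))
          - ∫ s in (t₀ - τ)..t₀, (fderiv ℝ Q (s - t₀, g s)) (1, 0) :=
      funext fun t₀ => (hder t₀).deriv
    have hle1 : ((min k m : ℕ) : WithTop ℕ∞) ≤ ((m + 1 : ℕ) : WithTop ℕ∞) := by
      exact_mod_cast (by omega : min k m ≤ m + 1)
    have hle2 : ((min k m : ℕ) : WithTop ℕ∞) ≤ ((k : ℕ) : WithTop ℕ∞) := by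
      exact_mod_cast min_le_left k m
    have hle3 : ((min k m : ℕ) : WithTop ℕ∞) ≤ ((min (k+1) m : ℕ) : WithTop ℕ∞) := by
      exact_mod_cast (by omega : min k m ≤ min (k+1) m)
    have hd : ContDiff ℝ (min k m : ℕ) (deriv (fun t => ∫ s in (t - τ)..t, Q (s - t, g s))) := by
      rw [hderiv_eq]
      refine ContDiff.sub (ContDiff.sub ?_ ?_) (hNP.of_le hle3)
      · exact (hQ.of_le hle1).comp
          (contDiff_const.prodMk (hg.of_le hle2))
      · exact (hQ.of_le hle1).comp
          (contDiff_const.prodMk ((hg.of_le hle2).comp (contDiff_id.sub contDiff_const)))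
    have : min (k + 1) (m + 1) = min k m + 1 := by omega
    rw [this]
    exact aux_contDiff_succ_of_deriv hdiff hd

end aux3

section aux4

variable {E F : Type*} [NormedAddCommGroup E] [NormedSpace ℝ E] [CompleteSpace E]
  [MeasurableSpace E] [BorelSpace E] [SecondCountableTopology E]
  [NormedAddCommGroup F] [NormedSpace ℝ F] [MeasurableSpace F] [BorelSpace F]
  [SecondCountableTopology F] [ProperSpace F]

/-- Continuity of the delayed integral for a bounded measurable `g`. -/
lemma aux_continuous_delay_meas {τ : ℝ} (hτ : 0 < τ) {Q : ℝ × F → E} {g : ℝ → F}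
    (hQ : Continuous Q) (hg : Measurable g) (C : ℝ) (hgb : ∀ t, ‖g t‖ ≤ C) :
    Continuous fun t => ∫ s in (t - τ)..t, Q (s - t, g s) := by
  -- rewrite as an integral of an indicator over ℝ
  have key : (fun t => ∫ s in (t - τ)..t, Q (s - t, g s)) =
      fun t => ∫ s, (Set.Ioc (t - τ) t).indicator (fun s => Q (s - t, g s)) s := by
    funext t
    rw [intervalIntegral.integral_of_le (by linarith : t - τ ≤ t),
      ← MeasureTheory.integral_indicator measurableSet_Ioc]
  rw [key, continuous_iff_continuousAt]
  intro t₀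
  -- compact bound for the kernel
  obtain ⟨B, hB⟩ := (IsCompact.exists_bound_of_continuousOn
    ((isCompact_Icc (a := -τ) (b := (0:ℝ))).prod
      (isCompact_closedBall (0 : F) C)) hQ.continuousOn)
  have hB0 : (0:ℝ) ≤ max B 0 := le_max_right _ _
  have hmeas : ∀ t : ℝ, Measurable fun s => Q (s - t, g s) := fun t =>
    hQ.measurable.comp ((measurable_id.sub measurable_const).prodMk hg)
  refine MeasureTheory.continuousAt_of_dominated
    (bound := (Set.Ioc (t₀ - τ - 1) (t₀ + 1)).indicator fun _ => max B 0)
    (Filter.Eventually.of_forall fun t =>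
      (((hmeas t).indicator measurableSet_Ioc).aestronglyMeasurable)) ?_ ?_ ?_
  · filter_upwards [Metric.ball_mem_nhds t₀ one_pos] with t ht
    refine MeasureTheory.ae_of_all _ fun s => ?_
    obtain ⟨ht1, ht2⟩ := abs_lt.1 (by rw [← Real.dist_eq]; exact Metric.mem_ball.1 ht)
    by_cases hs : s ∈ Set.Ioc (t - τ) t
    · rw [Set.indicator_of_mem hs]
      have hsbig : s ∈ Set.Ioc (t₀ - τ - 1) (t₀ + 1) :=
        ⟨by cases hs; linarith, by cases hs; linarith⟩
      rw [Set.indicator_of_mem hsbig]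
      refine le_trans (hB (s - t, g s) ?_) (le_max_left _ _)
      refine Set.mem_prod.2 ⟨(Set.mem_Icc.2 ⟨by cases hs; linarith, by cases hs; linarith⟩ :
        s - t ∈ Set.Icc (-τ) (0:ℝ)), ?_⟩
      exact Metric.mem_closedBall.2 (by rw [dist_zero_right]; exact hgb s)
    · rw [Set.indicator_of_notMem hs]
      simp only [norm_zero]
      exact Set.indicator_nonneg (fun _ _ => hB0) s
  · exact (MeasureTheory.integrable_indicator_iff measurableSet_Ioc).2
      (integrableOn_const measure_Ioc_lt_top.ne)
  · -- a.e. continuity in the parameter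
    have hnull : ∀ᵐ s : ℝ, s ∉ ({t₀ - τ, t₀} : Set ℝ) := by
      refine MeasureTheory.measure_eq_zero_iff_ae_notMem.1 ?_
      exact Set.Finite.measure_zero (Set.toFinite _) volume
    filter_upwards [hnull] with s hs
    have hs1 : s ≠ t₀ - τ := fun h => hs (by simp [h])
    have hs2 : s ≠ t₀ := fun h => hs (by simp [h])
    rcases lt_trichotomy s (t₀ - τ) with hlt | heq | hgt
    · -- s < t₀ - τ : locally zero
      have : ∀ᶠ t in nhds t₀, (Set.Ioc (t - τ) t).indicator (fun s => Q (s - t, g s)) s = 0 := by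
        filter_upwards [Metric.ball_mem_nhds t₀ (by linarith : (0:ℝ) < t₀ - τ - s)] with t ht
        obtain ⟨ht1, ht2⟩ := abs_lt.1 (by rw [← Real.dist_eq]; exact Metric.mem_ball.1 ht)
        exact Set.indicator_of_notMem (fun hmem => by
          have := hmem.1; linarith) _
      exact (continuousAt_const (y := (0:E))).congr (this.mono fun t h => h.symm)
    · exact absurd heq hs1
    · rcases lt_trichotomy s t₀ with hlt2 | heq2 | hgt2
      · -- t₀ - τ < s < t₀ : locally equal to the continuous function
        have hev : ∀ᶠ t in nhds t₀,
            (Set.Ioc (t - τ) t).indicator (fun s => Q (s - t, g s)) s = Q (s - t, g s) := by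
          filter_upwards [Metric.ball_mem_nhds t₀
            (lt_min (by linarith : (0:ℝ) < s - (t₀ - τ)) (by linarith : (0:ℝ) < t₀ - s))]
            with t ht
          have hd := Metric.mem_ball.1 ht
          rw [Real.dist_eq] at hd
          obtain ⟨ht1, ht2⟩ := abs_lt.1 (lt_of_lt_of_le hd (min_le_left _ _))
          obtain ⟨ht1', ht2'⟩ := abs_lt.1 (lt_of_lt_of_le hd (min_le_right _ _))
          exact Set.indicator_of_mem (Set.mem_Ioc.2 ⟨by linarith, by linarith⟩) _
        have hc : ContinuousAt (fun t => Q (s - t, g s)) t₀ :=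
          (hQ.comp ((continuous_const.sub continuous_id).prodMk continuous_const)).continuousAt
        exact hc.congr (hev.mono fun t h => h.symm)
      · exact absurd heq2 hs2
      · -- s > t₀ : locally zero
        have : ∀ᶠ t in nhds t₀,
            (Set.Ioc (t - τ) t).indicator (fun s => Q (s - t, g s)) s = 0 := by
          filter_upwards [Metric.ball_mem_nhds t₀ (by linarith : (0:ℝ) < s - t₀)] with t ht
          obtain ⟨ht1, ht2⟩ := abs_lt.1 (by rw [← Real.dist_eq]; exact Metric.mem_ball.1 ht)
          exact Set.indicator_of_notMem (fun hmem => by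
            have := hmem.2; linarith) _
        exact (continuousAt_const (y := (0:E))).congr (this.mono fun t h => h.symm)

end aux4

/-- Regularity of periodic solutions of the coupled renewal/delay system: if
`K, H` are `p` times continuously differentiable, `F̃, G̃` are `(p+1)` times
continuously differentiable, and `(x, y)` is a bounded measurable/differentiable
`ω`-periodic solution of the coupled system, then `x ∈ C^p` and `y ∈ C^{p+1}`. -/
theorem stmt7 (d p : ℕ) (hd : 1 ≤ d) (hp : 1 ≤ p)
    (τ ω : ℝ) (hτ : 0 < τ) (hω : 0 < ω)
    (K H : ℝ × (Fin d → ℝ) × (Fin d → ℝ) → Fin d → ℝ)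
    (hK : ContDiff ℝ p K) (hH : ContDiff ℝ p H)
    (Ftil Gtil : (Fin d → ℝ) × (Fin d → ℝ) → Fin d → ℝ)
    (hF : ContDiff ℝ (p + 1) Ftil) (hG : ContDiff ℝ (p + 1) Gtil)
    (x y : ℝ → Fin d → ℝ)
    (hxm : Measurable x) (C : ℝ) (hxb : ∀ t, ‖x t‖ ≤ C)
    (hyd : Differentiable ℝ y)
    (hxp : Function.Periodic x ω) (hyp : Function.Periodic y ω)
    (hxe : ∀ t : ℝ, x t = Ftil (∫ θ in (-τ)..0, K (θ, x (t + θ), y (t + θ)), y t))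
    (hye : ∀ t : ℝ, deriv y t = Gtil (∫ θ in (-τ)..0, H (θ, x (t + θ), y (t + θ)), y t)) :
    ContDiff ℝ p x ∧ ContDiff ℝ (p + 1) y := by
  -- reassociated kernels and combined solution
  set Kq : ℝ × ((Fin d → ℝ) × (Fin d → ℝ)) → Fin d → ℝ :=
    fun z => K (z.1, z.2.1, z.2.2) with hKq_def
  set Hq : ℝ × ((Fin d → ℝ) × (Fin d → ℝ)) → Fin d → ℝ :=
    fun z => H (z.1, z.2.1, z.2.2) with hHq_def
  set g : ℝ → (Fin d → ℝ) × (Fin d → ℝ) := fun t => (x t, y t) with hg_def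
  have hassoc : ContDiff ℝ p (fun z : ℝ × ((Fin d → ℝ) × (Fin d → ℝ)) =>
      ((z.1, z.2.1, z.2.2) : ℝ × (Fin d → ℝ) × (Fin d → ℝ))) :=
    contDiff_fst.prodMk ((contDiff_fst.comp contDiff_snd).prodMk (contDiff_snd.comp contDiff_snd))
  have hKq : ContDiff ℝ p Kq := by
    simpa [hKq_def, Function.comp_def] using hK.comp hassoc
  have hHq : ContDiff ℝ p Hq := by
    simpa [hHq_def, Function.comp_def] using hH.comp hassoc
  -- change of variables
  have cov : ∀ (Q : ℝ × ((Fin d → ℝ) × (Fin d → ℝ)) → Fin d → ℝ) (t : ℝ),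
      (∫ θ in (-τ)..0, Q (θ, (x (t + θ), y (t + θ)))) =
        ∫ s in (t - τ)..t, Q (s - t, g s) := by
    intro Q t
    have h := intervalIntegral.integral_comp_add_right (a := -τ) (b := 0)
      (fun s => Q (s - t, g s)) t
    rw [show -τ + t = t - τ by ring, zero_add] at h
    rw [← h]
    apply intervalIntegral.integral_congr
    intro θ _
    simp only [hg_def, add_comm θ t, add_sub_cancel_left]
  -- function representations
  have hxfun : x = fun t => Ftil (∫ s in (t - τ)..t, Kq (s - t, g s), y t) :=
    funext fun t => (hxe t).trans (by rw [← cov Kq t])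
  have hyfun : deriv y = fun t => Gtil (∫ s in (t - τ)..t, Hq (s - t, g s), y t) :=
    funext fun t => (hye t).trans (by rw [← cov Hq t])
  -- boundedness and measurability of g
  obtain ⟨Cy, hCy⟩ := (isCompact_Icc (a := (0:ℝ)) (b := ω)).exists_bound_of_continuousOn
    (hyd.continuous.continuousOn)
  have hyb : ∀ t, ‖y t‖ ≤ Cy := fun t => by
    obtain ⟨t', ht', he⟩ := hyp.exists_mem_Ico₀ hω t
    rw [he]
    exact hCy t' ⟨ht'.1, le_of_lt ht'.2⟩
  have hgb : ∀ t, ‖g t‖ ≤ max C Cy := fun t => by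
    rw [hg_def]
    rw [Prod.norm_def]
    exact max_le_max (hxb t) (hyb t)
  have hgm : Measurable g := hxm.prodMk hyd.continuous.measurable
  -- base continuity of the delayed integrals
  have hNKc : Continuous fun t => ∫ s in (t - τ)..t, Kq (s - t, g s) :=
    aux_continuous_delay_meas hτ hKq.continuous hgm (max C Cy) hgb
  have hNHc : Continuous fun t => ∫ s in (t - τ)..t, Hq (s - t, g s) :=
    aux_continuous_delay_meas hτ hHq.continuous hgm (max C Cy) hgb
  have hxc : Continuous x := by
    rw [hxfun]
    exact hF.continuous.comp (hNKc.prodMk hyd.continuous)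
  -- bootstrap
  have main : ∀ k : ℕ, k ≤ p → ContDiff ℝ (k : ℕ) x ∧ ContDiff ℝ ((k + 1 : ℕ)) y := by
    intro k
    induction k with
    | zero =>
      intro _
      refine ⟨by simpa only [Nat.cast_zero, contDiff_zero] using hxc, ?_⟩
      refine aux_contDiff_succ_of_deriv hyd ?_
      rw [Nat.cast_zero, contDiff_zero, hyfun]
      exact hG.continuous.comp (hNHc.prodMk hyd.continuous)
    | succ k ih =>
      intro hk
      obtain ⟨hx, hy⟩ := ih (by omega)
      have hgk : ContDiff ℝ (k : ℕ) g :=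
        hx.prodMk (hy.of_le (by exact_mod_cast Nat.le_succ k))
      have hNK := aux_contDiff_delay hτ p hKq hgk
      have hNH := aux_contDiff_delay hτ p hHq hgk
      rw [show min (k + 1) p = k + 1 from min_eq_left (by omega)] at hNK hNH
      have hle : ((k + 1 : ℕ) : WithTop ℕ∞) ≤ (p : WithTop ℕ∞) + 1 := by
        have : ((k + 1 : ℕ) : WithTop ℕ∞) ≤ ((p + 1 : ℕ) : WithTop ℕ∞) := by
          exact_mod_cast (by omega : k + 1 ≤ p + 1)
        simpa [Nat.cast_add, Nat.cast_one] using this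
      constructor
      · rw [hxfun]
        exact (hF.of_le hle).comp (hNK.prodMk hy)
      · refine aux_contDiff_succ_of_deriv hyd ?_
        rw [hyfun]
        exact (hG.of_le hle).comp (hNH.prodMk hy)
  obtain ⟨h1, h2⟩ := main p le_rfl
  refine ⟨h1, ?_⟩
  have : ((p + 1 : ℕ) : WithTop ℕ∞) = (p : WithTop ℕ∞) + 1 := by push_cast; rfl
  rwa [this] at h2
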